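/- In the mixed community setting with communities of sizes d_1 > d_2 ≥ ... ≥ d_m summing to N, the probability of error of the Sample Frequency Maximization algorithm (which outputs the community producing the most samples among t i.i.d. uniform samples from the population, ties broken randomly) satisfies P_e ≤ (m−1)·(1 − (√d_1 − √d_2)²/N)^t. -/

import Mathlib

open Finset in
private lemma sumprod_aux {N t : ℕ} (g : Fin N → ℝ) :
    ∑ ω : Fin t → Fin N, ∏ i, g (ω i) = (∑ x, g x) ^ t := by
  rw [← Fin.prod_const t (∑ x, g x), Finset.prod_univ_sum, Fintype.piFinset_univ]

open Finset Classical in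
private lemma measreal_aux {N t : ℕ} [NeZero N] (S : Set (Fin t → Fin N)) :
    (((PMF.uniformOfFintype (Fin t → Fin N)).toMeasure) S).toReal
      = (∑ ω : Fin t → Fin N, S.indicator (fun _ => (1:ℝ)) ω) / (N ^ t : ℝ) := by
  rw [PMF.toMeasure_apply_fintype]
  rw [ENNReal.toReal_sum (by
    intro a _
    simp only [Set.indicator_apply, PMF.uniformOfFintype_apply, Fintype.card_fun, Fintype.card_fin]
    split
    · exact ENNReal.inv_ne_top.2 (by simp [NeZero.ne N])
    · simp)]
  simp only [Set.indicator_apply, PMF.uniformOfFintype_apply, Fintype.card_fun, Fintype.card_fin,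
    apply_ite ENNReal.toReal, ENNReal.toReal_inv, ENNReal.toReal_pow]
  rw [Finset.sum_div]
  congr 1; ext ω
  split <;> simp

open Finset in
private lemma prodsplit_aux (t : ℕ) (P Q : Fin t → Prop) [DecidablePred P] [DecidablePred Q]
    (hPQ : ∀ i, ¬(P i ∧ Q i)) (a : ℝ) :
    ∏ i, (if P i then a⁻¹ else if Q i then a else 1)
      = a⁻¹ ^ (univ.filter P).card * a ^ (univ.filter Q).card := by
  have : ∀ i, (if P i then a⁻¹ else if Q i then a else 1)
      = (if P i then a⁻¹ else 1) * (if Q i then a else 1) := by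
    intro i
    by_cases h1 : P i <;> by_cases h2 : Q i <;> simp [h1, h2]
    · exact absurd ⟨h1, h2⟩ (hPQ i)
  simp_rw [this]
  rw [Finset.prod_mul_distrib, ← Finset.prod_filter, ← Finset.prod_filter,
    Finset.prod_const, Finset.prod_const]

private lemma key_ineq_aux (s0 s1 dj : ℝ) (h1 : 1 ≤ s1) (h01 : s1 ≤ s0) (hj : dj ≤ s1^2) :
    (s1/s0 - 1) * s0^2 + (s0/s1 - 1) * dj + (s0 - s1)^2 ≤ 0 := by
  have hs1 : (0:ℝ) < s1 := by linarith
  have hs0 : (0:ℝ) < s0 := by linarith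
  have key : ((s1/s0 - 1) * s0^2 + (s0/s1 - 1) * dj + (s0 - s1)^2) * (s0 * s1)
      = (s0 - s1) * (dj - s1^2) * s0 := by field_simp; ring
  nlinarith [mul_pos hs0 hs1, mul_nonneg (mul_nonneg (sub_nonneg.2 h01) (sub_nonneg.2 hj)) hs0.le]

set_option maxHeartbeats 1000000 in
theorem stmt4 (N m t : ℕ) [NeZero N] (hm : 2 ≤ m)
    (comm : Fin N → Fin m) (d : Fin m → ℕ)
    (hd : ∀ j, d j = (Finset.univ.filter (fun x => comm x = j)).card)
    (hord : ∀ j k : Fin m, j ≤ k → d k ≤ d j)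
    (h12 : d ⟨1, by omega⟩ < d ⟨0, by omega⟩)
    (sel : (Fin m → ℕ) → Fin m)
    (hsel : ∀ f : Fin m → ℕ, ∀ j, f j ≤ f (sel f)) :
    (((PMF.uniformOfFintype (Fin t → Fin N)).toMeasure)
        {ω | sel (fun j => (Finset.univ.filter (fun i => comm (ω i) = j)).card)
            ≠ ⟨0, by omega⟩}).toReal ≤
      ((m : ℝ) - 1) *
        (1 - (Real.sqrt (d ⟨0, by omega⟩) - Real.sqrt (d ⟨1, by omega⟩)) ^ 2 / N) ^ t := by
  classical
  open Finset in
  set z : Fin m := ⟨0, by omega⟩ with hz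
  set o : Fin m := ⟨1, by omega⟩ with ho
  have hNpos : (0:ℝ) < N := by exact_mod_cast Nat.pos_of_ne_zero (NeZero.ne N)
  set s0 : ℝ := Real.sqrt (d z) with hs0
  set s1 : ℝ := Real.sqrt (d o) with hs1
  set ρ : ℝ := 1 - (s0 - s1)^2 / N with hρ
  have hs0sq : s0 ^ 2 = (d z : ℝ) := Real.sq_sqrt (by positivity)
  have hs1sq : s1 ^ 2 = (d o : ℝ) := Real.sq_sqrt (by positivity)
  have hs1nn : 0 ≤ s1 := Real.sqrt_nonneg _
  have hs01 : s1 ≤ s0 := Real.sqrt_le_sqrt (by exact_mod_cast h12.le)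
  have hdzN : d z ≤ N := by rw [hd]; exact (Finset.card_filter_le _ _).trans (by simp)
  have hρnn : 0 ≤ ρ := by
    rw [hρ, sub_nonneg, div_le_one hNpos]
    have h2 : (s0:ℝ)^2 ≤ N := by rw [hs0sq]; exact_mod_cast hdzN
    nlinarith
  have hm1 : (1:ℝ) ≤ (m:ℝ) - 1 := by
    have : (2:ℝ) ≤ m := by exact_mod_cast hm
    linarith
  have hRHSnn : 0 ≤ ((m : ℝ) - 1) * ρ ^ t :=
    mul_nonneg (by linarith) (pow_nonneg hρnn t)
  -- degenerate case d o = 0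
  by_cases hdo : d o = 0
  · rcases Nat.eq_zero_or_pos t with ht | ht
    · subst ht
      refine le_trans ?_ (by simpa using hm1)
      have h1 : ((PMF.uniformOfFintype (Fin 0 → Fin N)).toMeasure)
          {ω | sel (fun j => (Finset.univ.filter (fun i => comm (ω i) = j)).card) ≠ z} ≤ 1 :=
        MeasureTheory.prob_le_one
      exact (ENNReal.toReal_le_toReal (by exact ne_top_of_le_ne_top ENNReal.one_ne_top h1)
        ENNReal.one_ne_top).2 h1 |>.trans (by simp)
    · -- event is empty
      have hcz : ∀ x, comm x = z := by
        intro x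
        by_contra hx
        have hle : o ≤ comm x := by
          rw [Fin.le_def]
          have : (comm x).val ≠ 0 := fun h => hx (Fin.ext (by simpa [hz] using h))
          simp [ho]; omega
        have : d (comm x) = 0 := Nat.le_zero.1 ((hord o (comm x) hle).trans_eq hdo)
        rw [hd] at this
        have hxmem : x ∈ univ.filter (fun y => comm y = comm x) := by simp
        rw [Finset.card_eq_zero] at this
        simp [this] at hxmem
      have hempty : {ω : Fin t → Fin N |
          sel (fun j => (Finset.univ.filter (fun i => comm (ω i) = j)).card) ≠ z} = ∅ := by
        ext ω
        simp only [Set.mem_setOf_eq, Set.mem_empty_iff_false, iff_false, not_not]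
        by_contra hne
        have h0 := hsel (fun j => (Finset.univ.filter (fun i => comm (ω i) = j)).card) z
        have hzt : (Finset.univ.filter (fun i => comm (ω i) = z)).card = t := by
          rw [Finset.filter_true_of_mem (fun i _ => hcz (ω i))]; simp
        have hjt : (Finset.univ.filter (fun i => comm (ω i) =
            sel (fun j => (Finset.univ.filter (fun i => comm (ω i) = j)).card))).card = 0 := by
          rw [Finset.card_eq_zero, Finset.filter_eq_empty_iff]
          intro i _
          rw [hcz (ω i)]
          exact fun h => hne h.symm
        rw [hzt, hjt] at h0
        omega
      rw [hempty]
      simpa using hRHSnn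
  -- main case: d o ≥ 1
  have hdo1 : 1 ≤ d o := Nat.pos_of_ne_zero hdo
  have hs1one : (1:ℝ) ≤ s1 := by
    nlinarith [hs1sq, (by exact_mod_cast hdo1 : (1:ℝ) ≤ (d o : ℝ))]
  have hs1pos : (0:ℝ) < s1 := by linarith
  have hs0pos : (0:ℝ) < s0 := by linarith
  set a : ℝ := s0 / s1 with haeq
  have ha1 : 1 ≤ a := (one_le_div hs1pos).2 hs01
  have ha0 : 0 < a := by linarith
  set g : Fin m → Fin N → ℝ :=
    fun j x => if comm x = z then a⁻¹ else if comm x = j then a else 1 with hg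
  have hgnn : ∀ j x, 0 ≤ g j x := by
    intro j x
    rw [hg]
    dsimp only
    split
    · positivity
    · split
      · linarith
      · norm_num
  -- per-j bound
  have hperj : ∀ j : Fin m, j ≠ z →
      (∑ ω : Fin t → Fin N, if (Finset.univ.filter (fun i => comm (ω i) = z)).card ≤
          (Finset.univ.filter (fun i => comm (ω i) = j)).card then (1:ℝ) else 0)
        ≤ ((N:ℝ) * ρ) ^ t := by
    intro j hj
    have hstep1 : ∀ ω : Fin t → Fin N,
        (if (Finset.univ.filter (fun i => comm (ω i) = z)).card ≤
            (Finset.univ.filter (fun i => comm (ω i) = j)).card then (1:ℝ) else 0)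
          ≤ ∏ i, g j (ω i) := by
      intro ω
      have hprod : ∏ i, g j (ω i)
          = a⁻¹ ^ (univ.filter (fun i => comm (ω i) = z)).card
            * a ^ (univ.filter (fun i => comm (ω i) = j)).card :=
        prodsplit_aux t _ _ (fun i ⟨h1, h2⟩ => hj (h2.symm.trans h1)) a
      split
      · rename_i h
        rw [hprod, inv_pow]
        rw [← inv_mul_cancel₀ (a := a ^ (univ.filter (fun i => comm (ω i) = z)).card)
          (by positivity)]
        gcongr
      · exact Finset.prod_nonneg (fun i _ => hgnn j (ω i))
    have hstep2 : ∑ ω : Fin t → Fin N, ∏ i, g j (ω i) = (∑ x, g j x) ^ t := sumprod_aux _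
    have hsumval : ∑ x, g j x = (N:ℝ) + (a⁻¹ - 1) * d z + (a - 1) * d j := by
      have hgx : ∀ x, g j x
          = 1 + (if comm x = z then a⁻¹ - 1 else 0) + (if comm x = j then a - 1 else 0) := by
        intro x
        rw [hg]
        dsimp only
        by_cases h1 : comm x = z <;> by_cases h2 : comm x = j <;>
          simp [h1, h2, hj, Ne.symm hj]
      simp_rw [hgx]
      rw [Finset.sum_add_distrib, Finset.sum_add_distrib, ← Finset.sum_filter,
        ← Finset.sum_filter, Finset.sum_const, Finset.sum_const, Finset.sum_const]
      simp only [nsmul_eq_mul, card_univ, Fintype.card_fin, mul_one]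
      rw [hd z, hd j]
      ring
    have hsumnn : 0 ≤ ∑ x, g j x := Finset.sum_nonneg (fun x _ => hgnn j x)
    have hNρ : (N:ℝ) * ρ = N - (s0 - s1)^2 := by
      rw [hρ, mul_sub, mul_one, mul_div_cancel₀ _ hNpos.ne']
    have hdj : (d j : ℝ) ≤ s1 ^ 2 := by
      rw [hs1sq]
      have hle : o ≤ j := by
        rw [Fin.le_def]
        have : j.val ≠ 0 := fun h => hj (Fin.ext (by simpa [hz] using h))
        simp [ho]; omega
      exact_mod_cast hord o j hle
    have hsumle : ∑ x, g j x ≤ (N:ℝ) * ρ := by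
      rw [hsumval, hNρ, ← hs0sq, haeq, inv_div]
      linarith [key_ineq_aux s0 s1 (d j) hs1one hs01 hdj]
    calc ∑ ω : Fin t → Fin N, (if (Finset.univ.filter (fun i => comm (ω i) = z)).card ≤
          (Finset.univ.filter (fun i => comm (ω i) = j)).card then (1:ℝ) else 0)
        ≤ ∑ ω : Fin t → Fin N, ∏ i, g j (ω i) := Finset.sum_le_sum (fun ω _ => hstep1 ω)
      _ = (∑ x, g j x) ^ t := hstep2
      _ ≤ ((N:ℝ) * ρ) ^ t := pow_le_pow_left₀ hsumnn hsumle t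
  -- union bound and conclusion
  rw [measreal_aux, div_le_iff₀ (by positivity)]
  simp only [Set.indicator_apply, Set.mem_setOf_eq]
  have hcard_erase : (((univ.erase z).card : ℕ) : ℝ) = (m:ℝ) - 1 := by
    rw [Finset.card_erase_of_mem (Finset.mem_univ z), card_univ, Fintype.card_fin]
    have h1m : (1:ℕ) ≤ m := by omega
    push_cast [Nat.cast_sub h1m]
    ring
  refine le_trans (Finset.sum_le_sum (g := fun ω => ∑ j ∈ univ.erase z,
      (if (Finset.univ.filter (fun i => comm (ω i) = z)).card ≤
        (Finset.univ.filter (fun i => comm (ω i) = j)).card then (1:ℝ) else 0))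
      fun ω _ => ?_) ?_
  · split
    · rename_i hω
      have h0 := hsel (fun j => (Finset.univ.filter (fun i => comm (ω i) = j)).card) z
      have hmem : sel (fun j => (Finset.univ.filter (fun i => comm (ω i) = j)).card)
          ∈ univ.erase z := Finset.mem_erase.2 ⟨hω, Finset.mem_univ _⟩
      have hss := Finset.single_le_sum (f := fun j =>
          (if (Finset.univ.filter (fun i => comm (ω i) = z)).card ≤
            (Finset.univ.filter (fun i => comm (ω i) = j)).card then (1:ℝ) else 0))
        (fun j _ => by positivity) hmem
      refine le_trans (le_of_eq ?_) hss
      exact (if_pos h0).symm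
    · exact Finset.sum_nonneg fun j _ => by positivity
  · rw [Finset.sum_comm]
    refine le_trans (Finset.sum_le_sum fun j hj => hperj j (Finset.mem_erase.1 hj).1) ?_
    rw [Finset.sum_const, nsmul_eq_mul, hcard_erase, mul_pow]
    exact le_of_eq (by ring)
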